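/- Let G be a finite simple graph, let f be a γ_R-function on G, and let V_i = {v ∈ V(G) : f(v) = i} for i ∈ {0,1,2}. If v ∈ V_2 has no neighbour in V_2 and has precisely one external private neighbour w with respect to V_2, then no neighbour of w lies in V_1. -/
import Mathlib


open SimpleGraph

/-- The closed neighbourhood `N[v]` of a vertex `v`: `v` together with its neighbours. -/
def closedNbhd {V : Type*} (G : SimpleGraph V) (v : V) : Set V :=
  insert v (G.neighborSet v)

/-- A Roman dominating function on `G`: a map into `{0,1,2}` such that every vertex with
value `0` has a neighbour with value `2`. -/
def IsRomanDominating {V : Type*} (G : SimpleGraph V) (f : V → ℕ) : Prop :=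
  (∀ v, f v ≤ 2) ∧ ∀ v, f v = 0 → ∃ u, G.Adj v u ∧ f u = 2

/-- The Roman domination number `γ_R(G)`: the minimum weight of a Roman dominating
function on `G`. -/
noncomputable def romanNumber {V : Type*} [Fintype V] (G : SimpleGraph V) : ℕ :=
  sInf {w | ∃ f : V → ℕ, IsRomanDominating G f ∧ ∑ v, f v = w}

/-- A two-neighbour packing of `G`: a set of vertices such that every closed
neighbourhood contains at most two of its members. -/
def IsTwoNbrPacking {V : Type*} (G : SimpleGraph V) (A : Set V) : Prop :=
  ∀ v, (closedNbhd G v ∩ A).ncard ≤ 2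

/-- The two-neighbour packing number `γ̄_R(G)`: the maximum size of a two-neighbour
packing of `G`. -/
noncomputable def tnpNumber {V : Type*} [Fintype V] (G : SimpleGraph V) : ℕ :=
  sSup {n | ∃ A : Set V, IsTwoNbrPacking G A ∧ A.ncard = n}

/-- `u` is a private neighbour of `v` with respect to `V₂`: `u ∈ N[v]` but `u ∉ N[v']`
for every `v' ∈ V₂ \ {v}`. -/
def IsPrivateNbr {V : Type*} (G : SimpleGraph V) (V₂ : Set V) (u v : V) : Prop :=
  u ∈ closedNbhd G v ∧ ∀ v' ∈ V₂, v' ≠ v → u ∉ closedNbhd G v'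

theorem isolated_in_V2_unique_external_pn {V : Type*} [Fintype V] (G : SimpleGraph V)
    (f : V → ℕ) (hf : IsRomanDominating G f) (hmin : ∑ v, f v = romanNumber G)
    (v : V) (hv : f v = 2)
    (hiso : ∀ u, G.Adj v u → f u ≠ 2)
    (w : V)
    (hw : {u : V | IsPrivateNbr G {x : V | f x = 2} u v ∧ f u ≠ 2} = {w}) :
    ∀ u, G.Adj w u → f u ≠ 1 := by
  classical
  intro u hadj hu1
  have hwmem : IsPrivateNbr G {x : V | f x = 2} w v ∧ f w ≠ 2 := by
    have : w ∈ ({w} : Set V) := rfl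
    rw [← hw] at this
    exact this
  obtain ⟨⟨hwN, hwpriv⟩, hwne2⟩ := hwmem
  have hvw : v ≠ w := fun h => hwne2 (h ▸ hv)
  have hadjvw : G.Adj v w := by
    rcases hwN with h | h
    · exact absurd h.symm hvw
    · exact h
  have huv : u ≠ v := fun h => by rw [h, hv] at hu1; omega
  have huw : u ≠ w := fun h => (G.ne_of_adj hadj).symm h
  -- the improved function
  set g : V → ℕ := fun x => if x = w then 2 else if x = v then 0 else if x = u then 0 else f x with hg
  have hgw : g w = 2 := by simp [hg]
  have hgv : g v = 0 := by simp [hg, hvw]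
  have hgu : g u = 0 := by simp [hg, huw, huv]
  have hgother : ∀ x, x ≠ w → x ≠ v → x ≠ u → g x = f x := by
    intro x h1 h2 h3; simp [hg, h1, h2, h3]
  have hg2 : ∀ x, f x = 2 → x ≠ v → g x = 2 := by
    intro x hx2 hxv
    have hxw : x ≠ w := fun h => hwne2 (h ▸ hx2)
    have hxu : x ≠ u := fun h => by rw [h, hu1] at hx2; omega
    rw [hgother x hxw hxv hxu]; exact hx2
  have hRDF : IsRomanDominating G g := by
    constructor
    · intro x
      by_cases h1 : x = w
      · rw [h1, hgw]
      · by_cases h2 : x = v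
        · rw [h2, hgv]; omega
        · by_cases h3 : x = u
          · rw [h3, hgu]; omega
          · rw [hgother x h1 h2 h3]; exact hf.1 x
    · intro x hx0
      have hxw : x ≠ w := fun h => by rw [h, hgw] at hx0; omega
      by_cases h2 : x = v
      · exact ⟨w, h2 ▸ hadjvw, hgw⟩
      · by_cases h3 : x = u
        · exact ⟨w, h3 ▸ hadj.symm, hgw⟩
        · have hfx0 : f x = 0 := by rw [← hgother x hxw h2 h3]; exact hx0
          obtain ⟨y, hxy, hy2⟩ := hf.2 x hfx0
          by_cases hyv : y = v
          · -- x is a neighbour of v with f x = 0; x ≠ w so x is not a private nbr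
            subst hyv
            have hxN : x ∈ closedNbhd G y := Set.mem_insert_of_mem _ hxy.symm
            have hnotpriv : ¬ IsPrivateNbr G {z : V | f z = 2} x y := by
              intro hp
              have : x ∈ ({w} : Set V) := by
                rw [← hw]; exact ⟨hp, by rw [hfx0]; omega⟩
              exact hxw this
            rw [IsPrivateNbr] at hnotpriv
            push_neg at hnotpriv
            obtain ⟨v', hv'2, hv'ne, hxv'⟩ := hnotpriv hxN
            have hxne : x ≠ v' := by
              intro h
              have h2' : f v' = 2 := hv'2
              rw [← h] at h2'
              omega
            have hadjx : G.Adj x v' := by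
              rcases hxv' with h | h
              · exact absurd h hxne
              · exact h.symm
            exact ⟨v', hadjx, hg2 v' hv'2 hv'ne⟩
          · exact ⟨y, hxy, hg2 y hy2 hyv⟩
  -- weight comparison
  have hsum : ∑ x, g x < ∑ x, f x := by
    have htv : v ∉ ({u, w} : Finset V) := by
      simp [huv.symm, hvw]
    have htu : u ∉ ({w} : Finset V) := by simp [huw]
    have hsub : ({v, u, w} : Finset V) ⊆ Finset.univ := Finset.subset_univ _
    have hsplitf := (Finset.sum_sdiff (f := f) hsub).symm
    have hsplitg := (Finset.sum_sdiff (f := g) hsub).symm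
    have htf : ∑ x ∈ ({v, u, w} : Finset V), f x = f v + f u + f w := by
      rw [Finset.sum_insert htv, Finset.sum_insert htu, Finset.sum_singleton]; ring
    have htg : ∑ x ∈ ({v, u, w} : Finset V), g x = 2 := by
      rw [Finset.sum_insert htv, Finset.sum_insert htu, Finset.sum_singleton,
        hgv, hgu, hgw]
      omega
    have heq : ∑ x ∈ Finset.univ \ ({v, u, w} : Finset V), g x
        = ∑ x ∈ Finset.univ \ ({v, u, w} : Finset V), f x := by
      apply Finset.sum_congr rfl
      intro x hx
      simp only [Finset.mem_sdiff, Finset.mem_insert, Finset.mem_singleton] at hx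
      push_neg at hx
      exact hgother x hx.2.2.2 hx.2.1 hx.2.2.1
    rw [hsplitf, hsplitg, htf, htg, heq, hv, hu1]
    omega
  have hle : romanNumber G ≤ ∑ x, g x := Nat.sInf_le ⟨g, hRDF, rfl⟩
  rw [hmin] at hsum
  omega
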